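/- Let β_1,…,β_n be a T-action datum in V and let 1 ≤ j < j' ≤ n. There exists θ ∈ S(λ,β) with J_θ = {j,j'} if and only if γ_{j'} = γ_j, γ_k ≠ γ_j for all j < k < j', and a_{γ_k,γ_j} is a nonpositive integer for all j < k < j'. In that case the (unique) such θ is given by θ_j = θ_{j'} = −1, θ_k = −a_{γ_k,γ_j} for j < k < j', and θ_k = 0 for all other k ∈ [1,n]. -/

import Mathlib

open Finset Matrix

noncomputable section

/-- The standard embedding of an integer vector into `ℂⁿ`. -/
def cvec {n : ℕ} (w : Fin n → ℤ) : Fin n → ℂ := fun j => (w j : ℂ)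

/-- `J_w = { j : w_j = -1 }`. -/
def Jset {n : ℕ} (w : Fin n → ℤ) : Finset (Fin n) :=
  Finset.univ.filter (fun j => w j = -1)

/-- The linear map `β : ℂⁿ → V`, `w ↦ ∑ w_j β_j`. -/
def bmap {n : ℕ} {V : Type*} [AddCommGroup V] [Module ℂ V]
    (β : Fin n → V) (w : Fin n → ℂ) : V :=
  ∑ j, w j • β j

/-- The pair `(λ, β)` is T-log-symplectic. -/
def TLogSymp {n : ℕ} {V : Type*} [AddCommGroup V] [Module ℂ V]
    (M : Matrix (Fin n) (Fin n) ℂ) (β : Fin n → V) : Prop :=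
  ∀ w : Fin n → ℂ, M.mulVec w = 0 → bmap β w = 0 → w = 0

/-- The set `W(λ, β)`. -/
def Wset {n : ℕ} {V : Type*} [AddCommGroup V] [Module ℂ V]
    (M : Matrix (Fin n) (Fin n) ℂ) (β : Fin n → V) : Set (Fin n → ℤ) :=
  {w | (∀ j, -1 ≤ w j) ∧ (∀ j, j ∉ Jset w → M.mulVec (cvec w) j = 0) ∧
    bmap β (cvec w) = 0}

/-- The set `S(λ, β)` of smoothable weights. -/
def Sset {n : ℕ} {V : Type*} [AddCommGroup V] [Module ℂ V]
    (M : Matrix (Fin n) (Fin n) ℂ) (β : Fin n → V) : Set (Fin n → ℤ) :=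
  {θ | θ ∈ Wset M β ∧ (Jset θ).card = 2}

/-- `S_m`: sums of exactly `m` elements of `S`, repetitions allowed. -/
def SumOf {n : ℕ} (S : Set (Fin n → ℤ)) (m : ℕ) : Set (Fin n → ℤ) :=
  {w | ∃ l : Multiset (Fin n → ℤ), (∀ x ∈ l, x ∈ S) ∧ Multiset.card l = m ∧ l.sum = w}

/-- `S_{≥ m}`: sums of at least `m` elements of `S`, repetitions allowed. -/
def SumGE {n : ℕ} (S : Set (Fin n → ℤ)) (m : ℕ) : Set (Fin n → ℤ) :=
  {w | ∃ m', m ≤ m' ∧ w ∈ SumOf S m'}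

/-- A vector `w ∈ ℤⁿ` is negatively bordered. -/
def NegBordered {n : ℕ} (w : Fin n → ℤ) : Prop :=
  ∃ j k : Fin n, j < k ∧ w j = -1 ∧ w k = -1 ∧ (∀ i, i < j → w i = 0) ∧
    (∀ i, k < i → w i = 0) ∧ (∀ i, j < i → i < k → 0 ≤ w i)

/-- The Cartan number `a_{b,ξ} = 2⟨b,ξ⟩/⟨b,b⟩`. -/
def cartan {V : Type*} [AddCommGroup V] [Module ℂ V]
    (B : V →ₗ[ℂ] V →ₗ[ℂ] ℂ) (b ξ : V) : ℂ :=
  2 * B b ξ / B b b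

/-- The reflection `s_b(ξ) = ξ - a_{b,ξ} b`. -/
def sRefl {V : Type*} [AddCommGroup V] [Module ℂ V]
    (B : V →ₗ[ℂ] V →ₗ[ℂ] ℂ) (b ξ : V) : V :=
  ξ - cartan B b ξ • b

/-- `reflL B g m = s_{g 0} ∘ s_{g 1} ∘ ⋯ ∘ s_{g (m-1)}`. -/
def reflL {V : Type*} [AddCommGroup V] [Module ℂ V]
    (B : V →ₗ[ℂ] V →ₗ[ℂ] ℂ) (g : ℕ → V) : ℕ → V → V
  | 0, ξ => ξ
  | m + 1, ξ => reflL B g m (sRefl B (g m) ξ)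

/-- `reflR B g m = s_{g (m-1)} ∘ ⋯ ∘ s_{g 1} ∘ s_{g 0}`. -/
def reflR {V : Type*} [AddCommGroup V] [Module ℂ V]
    (B : V →ₗ[ℂ] V →ₗ[ℂ] ℂ) (g : ℕ → V) : ℕ → V → V
  | 0, ξ => ξ
  | m + 1, ξ => sRefl B (g m) (reflR B g m ξ)

/-- Extension of a `Fin n`-indexed family to `ℕ` by zero. -/
def gext {n : ℕ} {V : Type*} [AddCommGroup V] (v : Fin n → V) : ℕ → V :=
  fun t => if h : t < n then v ⟨t, h⟩ else 0

/-- `γ_j = s_{β_1} s_{β_2} ⋯ s_{β_{j-1}} (β_j)`. -/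
def gam {n : ℕ} {V : Type*} [AddCommGroup V] [Module ℂ V]
    (B : V →ₗ[ℂ] V →ₗ[ℂ] ℂ) (β : Fin n → V) (j : Fin n) : V :=
  reflL B (gext β) j.val (β j)

/-- The Poisson coefficient matrix `λ` of a T-action datum: `λ_{jk} = -⟨β_j, β_k⟩` for
`j < k`, `⟨β_j, β_k⟩` for `j > k`, and `0` on the diagonal. -/
def lam {n : ℕ} {V : Type*} [AddCommGroup V] [Module ℂ V]
    (B : V →ₗ[ℂ] V →ₗ[ℂ] ℂ) (β : Fin n → V) : Matrix (Fin n) (Fin n) ℂ :=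
  Matrix.of fun j k =>
    if j < k then -(B (β j) (β k)) else if k < j then B (β j) (β k) else 0

/-- The upper triangular matrix `Q` with `Q_{jj} = 1` and `Q_{jk} = a_{γ_j, γ_k}` for
`j < k`. -/
def Qmat {n : ℕ} {V : Type*} [AddCommGroup V] [Module ℂ V]
    (B : V →ₗ[ℂ] V →ₗ[ℂ] ℂ) (γ : Fin n → V) : Matrix (Fin n) (Fin n) ℂ :=
  Matrix.of fun j k => if j = k then 1 else if j < k then cartan B (γ j) (γ k) else 0

open scoped Classical in
/-- The set `{k ∈ [j+1, n] : γ_k = γ_j}`, whose minimum (when it exists) is `j⁺`. -/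
def plusSet {n : ℕ} {V : Type*} (γ : Fin n → V) (j : Fin n) : Finset (Fin n) :=
  Finset.univ.filter (fun k => j < k ∧ γ k = γ j)

/-- `e_{j⁺} ∈ ℂⁿ`, with the convention `e_{+∞} = 0`. -/
def eplus {n : ℕ} {V : Type*} (γ : Fin n → V) (j : Fin n) : Fin n → ℂ :=
  if h : (plusSet γ j).Nonempty then Pi.single ((plusSet γ j).min' h) 1 else 0

/-- `θ^{(j)} = Q (e_j - e_{j⁺}) ∈ ℂⁿ`. -/
def thetaC {n : ℕ} {V : Type*} [AddCommGroup V] [Module ℂ V]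
    (B : V →ₗ[ℂ] V →ₗ[ℂ] ℂ) (β : Fin n → V) (j : Fin n) : Fin n → ℂ :=
  (Qmat B (gam B β)).mulVec ((Pi.single j 1 : Fin n → ℂ) - eplus (gam B β) j)

/-- The linear map `β : ℂⁿ → V`, `w ↦ ∑ w_j β_j`, as a bundled linear map. -/
def betaLin {n : ℕ} {V : Type*} [AddCommGroup V] [Module ℂ V]
    (β : Fin n → V) : (Fin n → ℂ) →ₗ[ℂ] V where
  toFun w := ∑ j, w j • β j
  map_add' x y := by simp [add_smul, Finset.sum_add_distrib]
  map_smul' a x := by simp [Finset.smul_sum, smul_smul]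

section Aux
variable {V : Type*} [AddCommGroup V] [Module ℂ V] (B : V →ₗ[ℂ] V →ₗ[ℂ] ℂ)

lemma cartan_zero_right (b : V) : cartan B b 0 = 0 := by simp [cartan]

lemma cartan_self (b : V) (hb : B b b ≠ 0) : cartan B b b = 2 := by
  rw [cartan, mul_div_assoc, div_self hb, mul_one]

lemma cartan_smul_self (b : V) (hb : B b b ≠ 0) (c : ℂ) : cartan B b (c • b) = 2 * c := by
  rw [cartan, _root_.map_smul, smul_eq_mul]
  field_simp

lemma sRefl_self (b : V) (hb : B b b ≠ 0) : sRefl B b b = -b := by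
  rw [sRefl, cartan_self B b hb]
  module

lemma sRefl_adj (hB : ∀ x y, B x y = B y x) (b x y : V) :
    B (sRefl B b x) y = B x (sRefl B b y) := by
  simp only [sRefl, cartan, map_sub, _root_.map_smul, LinearMap.sub_apply, LinearMap.smul_apply,
    smul_eq_mul]
  rw [hB b y, hB x b]
  ring

lemma sRefl_sRefl (b : V) (hb : B b b ≠ 0 ∨ b = 0) (x : V) :
    sRefl B b (sRefl B b x) = x := by
  rcases hb with hb | rfl
  · have hc : cartan B b (sRefl B b x) = -cartan B b x := by
      simp only [sRefl, cartan, map_sub, _root_.map_smul, smul_eq_mul]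
      field_simp
      ring
    rw [sRefl, hc, sRefl]
    module
  · simp [sRefl]

lemma sRefl_orth (hB : ∀ x y, B x y = B y x) (b : V) (hb : B b b ≠ 0 ∨ b = 0) (x y : V) :
    B (sRefl B b x) (sRefl B b y) = B x y := by
  rcases hb with hb | rfl
  · simp only [sRefl, cartan, map_sub, _root_.map_smul, LinearMap.sub_apply, LinearMap.smul_apply,
      smul_eq_mul]
    rw [hB x b]
    field_simp
    ring
  · simp [sRefl]

variable (g : ℕ → V)

lemma reflL_reflR (hg : ∀ t, B (g t) (g t) ≠ 0 ∨ g t = 0) (m : ℕ) (x : V) :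
    reflL B g m (reflR B g m x) = x := by
  induction m generalizing x with
  | zero => rfl
  | succ m ih => rw [reflR, reflL, sRefl_sRefl B _ (hg m), ih]

lemma reflR_reflL (hg : ∀ t, B (g t) (g t) ≠ 0 ∨ g t = 0) (m : ℕ) (x : V) :
    reflR B g m (reflL B g m x) = x := by
  induction m generalizing x with
  | zero => rfl
  | succ m ih => rw [reflL, reflR, ih, sRefl_sRefl B _ (hg m)]

lemma reflL_orth (hB : ∀ x y, B x y = B y x) (hg : ∀ t, B (g t) (g t) ≠ 0 ∨ g t = 0)
    (m : ℕ) (x y : V) : B (reflL B g m x) (reflL B g m y) = B x y := by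
  induction m generalizing x y with
  | zero => rfl
  | succ m ih => rw [reflL, reflL, ih, sRefl_orth B hB _ (hg m)]

lemma reflL_adj (hB : ∀ x y, B x y = B y x) (m : ℕ) (x y : V) :
    B (reflL B g m x) y = B x (reflR B g m y) := by
  induction m generalizing x y with
  | zero => rfl
  | succ m ih => rw [reflL, reflR, ih, sRefl_adj B hB]

lemma reflL_shift (a : ℕ) (m : ℕ) (x : V) :
    reflL B g (a + m) x = reflL B g a (reflL B (fun t => g (a + t)) m x) := by
  induction m generalizing x with
  | zero => rfl
  | succ m ih => rw [show a + (m+1) = (a + m) + 1 from rfl, reflL, ih, reflL]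

lemma reflR_succ_shift (m : ℕ) (x : V) :
    reflR B g (m + 1) x = reflR B (fun t => g (t + 1)) m (sRefl B (g 0) x) := by
  induction m generalizing x with
  | zero => rfl
  | succ m ih => rw [reflR, ih, reflR]

end Aux
section Aux2
variable {n : ℕ} {V : Type*} [AddCommGroup V] [Module ℂ V] (B : V →ₗ[ℂ] V →ₗ[ℂ] ℂ)
variable (β : Fin n → V)

/-- Partial sum `∑_{l < m} w_l β_l`. -/
def psum (m : ℕ) (w : Fin n → ℂ) : V :=
  ∑ l ∈ Finset.univ.filter (fun l : Fin n => (l : ℕ) < m), w l • β l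

lemma psum_succ {m : ℕ} (h : m < n) (w : Fin n → ℂ) :
    psum β (m + 1) w = psum β m w + w ⟨m, h⟩ • β ⟨m, h⟩ := by
  rw [psum, psum]
  have he : Finset.univ.filter (fun l : Fin n => (l : ℕ) < m + 1)
      = insert (⟨m, h⟩ : Fin n) (Finset.univ.filter (fun l : Fin n => (l : ℕ) < m)) := by
    ext l
    simp only [Finset.mem_filter, Finset.mem_insert, Finset.mem_univ, true_and, Fin.ext_iff]
    omega
  rw [he, Finset.sum_insert (by simp)]
  abel

lemma psum_eq_zero {m : ℕ} (w : Fin n → ℂ) (h : ∀ l : Fin n, (l : ℕ) < m → w l = 0) :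
    psum β m w = 0 := by
  refine Finset.sum_eq_zero fun l hl => ?_
  rw [h l (by simpa using hl), zero_smul]

lemma bmap_split (m : ℕ) (w : Fin n → ℂ) :
    bmap β w = psum β m w + ∑ l ∈ Finset.univ.filter (fun l : Fin n => ¬ (l : ℕ) < m),
      w l • β l := by
  rw [bmap, psum, Finset.sum_filter_add_sum_filter_not]

lemma B_psum (b : V) (m : ℕ) (w : Fin n → ℂ) :
    B b (psum β m w) = ∑ l ∈ Finset.univ.filter (fun l : Fin n => (l : ℕ) < m),
      w l * B b (β l) := by
  simp [psum, map_sum, _root_.map_smul, smul_eq_mul]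

lemma lam_mulVec (hB : ∀ x y, B x y = B y x) (w : Fin n → ℂ) (hw : bmap β w = 0) (k : Fin n) :
    (lam B β).mulVec w k = 2 * B (β k) (psum β (k : ℕ) w) + B (β k) (β k) * w k := by
  have h0 : ∑ l : Fin n, w l * B (β k) (β l) = 0 := by
    have h := congrArg (B (β k)) hw
    simpa [bmap, map_sum, _root_.map_smul, smul_eq_mul] using h
  have key : ∀ l : Fin n, lam B β k l * w l + w l * B (β k) (β l)
      = (if (l : ℕ) < (k : ℕ) then 2 * (w l * B (β k) (β l)) else 0)
        + (if l = k then B (β k) (β k) * w k else 0) := by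
    intro l
    simp only [lam, Matrix.of_apply]
    rcases lt_trichotomy l k with h | rfl | h
    · rw [if_neg (asymm h), if_pos h, if_pos (show (l : ℕ) < (k : ℕ) from h),
        if_neg (ne_of_lt h)]
      ring
    · rw [if_neg (lt_irrefl l), if_neg (lt_irrefl l), if_neg (lt_irrefl (l : ℕ)), if_pos rfl]
      ring
    · rw [if_pos h, if_neg (show ¬ (l : ℕ) < (k : ℕ) from not_lt_of_gt h),
        if_neg (ne_of_gt h)]
      ring
  have e1 : (lam B β).mulVec w k = ∑ l : Fin n, lam B β k l * w l := rfl
  rw [e1, ← add_zero (∑ l : Fin n, lam B β k l * w l), ← h0, ← Finset.sum_add_distrib]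
  rw [Finset.sum_congr rfl (fun l _ => key l), Finset.sum_add_distrib]
  rw [Finset.sum_ite_eq' Finset.univ k (fun _ => B (β k) (β k) * w k)]
  rw [if_pos (Finset.mem_univ k), ← Finset.sum_filter, B_psum, Finset.mul_sum]

lemma lam_mulVec_zero_iff (hB : ∀ x y, B x y = B y x) (hβ : ∀ i, B (β i) (β i) ≠ 0)
    (w : Fin n → ℂ) (hw : bmap β w = 0) (k : Fin n) :
    (lam B β).mulVec w k = 0 ↔ w k = -cartan B (β k) (psum β (k : ℕ) w) := by
  rw [lam_mulVec B β hB w hw k, cartan]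
  have hk := hβ k
  constructor
  · intro h
    field_simp
    linear_combination h
  · intro h
    rw [h]
    field_simp
    ring

end Aux2
section Aux3
variable {n : ℕ} {V : Type*} [AddCommGroup V] [Module ℂ V] (B : V →ₗ[ℂ] V →ₗ[ℂ] ℂ)
variable (β : Fin n → V)

/-- `u_m = s_{β_{j+1+m}} ⋯ s_{β_{j+2}} s_{β_{j+1}} (-β_j)` (0-indexed). -/
def uvec (j : Fin n) (m : ℕ) : V :=
  reflR B (fun t => gext β ((j : ℕ) + 1 + t)) m (-(β j))

lemma gext_ne (hβ : ∀ i, B (β i) (β i) ≠ 0) :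
    ∀ t, B (gext β t) (gext β t) ≠ 0 ∨ gext β t = 0 := by
  intro t
  rw [gext]
  split
  · exact Or.inl (hβ _)
  · exact Or.inr rfl

lemma uvec_succ (j : Fin n) (m : ℕ) (h : (j : ℕ) + 1 + m < n) :
    uvec B β j (m + 1) = sRefl B (β ⟨(j : ℕ) + 1 + m, h⟩) (uvec B β j m) := by
  rw [uvec, reflR, ← uvec]
  congr 1
  rw [gext, dif_pos h]

lemma reflR_gext (hβ : ∀ i, B (β i) (β i) ≠ 0) (j : Fin n) (m : ℕ) :
    reflR B (fun t => gext β ((j : ℕ) + t)) (m + 1) (β j) = uvec B β j m := by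
  rw [reflR_succ_shift, uvec]
  have h1 : (fun t => gext β ((j : ℕ) + (t + 1))) = fun t => gext β ((j : ℕ) + 1 + t) := by
    funext t
    congr 1
    omega
  have h2 : gext β ((j : ℕ) + 0) = β j := by
    rw [gext, dif_pos (show (j : ℕ) + 0 < n by omega)]
    exact congrArg β (Fin.ext (by simp))
  rw [h1, h2, sRefl_self B (β j) (hβ j)]

lemma gam_decomp (j : Fin n) {m : ℕ} (hm : (j : ℕ) + m = (j : ℕ)) : True := trivial

lemma B_gam_pair (hB : ∀ x y, B x y = B y x) (hβ : ∀ i, B (β i) (β i) ≠ 0)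
    (j k : Fin n) (hjk : j < k) :
    B (gam B β k) (gam B β j) = B (β k) (uvec B β j ((k : ℕ) - (j : ℕ) - 1)) := by
  have hg := gext_ne B β hβ
  obtain ⟨m, hm⟩ : ∃ m, (k : ℕ) = (j : ℕ) + (m + 1) := ⟨(k : ℕ) - (j : ℕ) - 1, by omega⟩
  have hmm : (k : ℕ) - (j : ℕ) - 1 = m := by omega
  rw [hmm, gam, gam, hm, reflL_shift, reflL_orth B (gext β) hB hg,
    reflL_adj B _ hB, reflR_gext B β hβ]

lemma B_gam_self (hB : ∀ x y, B x y = B y x) (hβ : ∀ i, B (β i) (β i) ≠ 0) (k : Fin n) :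
    B (gam B β k) (gam B β k) = B (β k) (β k) := by
  rw [gam, reflL_orth B (gext β) hB (gext_ne B β hβ)]

lemma cartan_gam (hB : ∀ x y, B x y = B y x) (hβ : ∀ i, B (β i) (β i) ≠ 0)
    (j k : Fin n) (hjk : j < k) :
    cartan B (gam B β k) (gam B β j)
      = cartan B (β k) (uvec B β j ((k : ℕ) - (j : ℕ) - 1)) := by
  rw [cartan, cartan, B_gam_pair B β hB hβ j k hjk, B_gam_self B β hB hβ k]

lemma gam_eq_iff (hB : ∀ x y, B x y = B y x) (hβ : ∀ i, B (β i) (β i) ≠ 0)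
    (j j' : Fin n) (hjj' : j < j') :
    gam B β j' = gam B β j ↔ β j' = uvec B β j ((j' : ℕ) - (j : ℕ) - 1) := by
  have hg := gext_ne B β hβ
  have hg' : ∀ t, B (gext β ((j : ℕ) + t)) (gext β ((j : ℕ) + t)) ≠ 0
      ∨ gext β ((j : ℕ) + t) = 0 := fun t => hg _
  obtain ⟨m, hm⟩ : ∃ m, (j' : ℕ) = (j : ℕ) + (m + 1) := ⟨(j' : ℕ) - (j : ℕ) - 1, by omega⟩
  have hmm : (j' : ℕ) - (j : ℕ) - 1 = m := by omega
  rw [hmm, ← reflR_gext B β hβ j m]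
  constructor
  · intro h
    rw [gam, gam, hm, reflL_shift] at h
    have h2 := congrArg (reflR B (gext β) (j : ℕ)) h
    rw [reflR_reflL B (gext β) hg, reflR_reflL B (gext β) hg] at h2
    have h3 := congrArg (reflR B (fun t => gext β ((j : ℕ) + t)) (m + 1)) h2
    rwa [reflR_reflL B _ hg'] at h3
  · intro h
    rw [gam, gam, hm, reflL_shift, h, reflL_reflR B _ hg']

end Aux3
section Aux4
variable {n : ℕ} {V : Type*} [AddCommGroup V] [Module ℂ V] (B : V →ₗ[ℂ] V →ₗ[ℂ] ℂ)
variable (β : Fin n → V)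

lemma psum_eq_u (j j' : Fin n) (hjj' : j < j') (w : Fin n → ℂ)
    (h0 : ∀ l : Fin n, (l : ℕ) < (j : ℕ) → w l = 0) (hj : w j = -1)
    (hrec : ∀ k : Fin n, j < k → k < j' →
      w k = -cartan B (β k) (psum β (k : ℕ) w)
        ∨ w k = -cartan B (β k) (uvec B β j ((k : ℕ) - (j : ℕ) - 1))) :
    ∀ d, (j : ℕ) + d < (j' : ℕ) → psum β ((j : ℕ) + d + 1) w = uvec B β j d := by
  intro d
  induction d with
  | zero =>
    intro _
    rw [psum_succ β (show (j : ℕ) + 0 < n by have := j.isLt; omega) w]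
    have e1 : (⟨(j : ℕ) + 0, by have := j.isLt; omega⟩ : Fin n) = j := Fin.ext (by simp)
    rw [e1]
    simp only [Nat.add_zero]
    rw [psum_eq_zero β w h0, hj, uvec, reflR]
    rw [zero_add]
    module
  | succ d ih =>
    intro hd
    have hd' : (j : ℕ) + d < (j' : ℕ) := by omega
    have hkn : (j : ℕ) + d + 1 < n := by have := j'.isLt; omega
    set k : Fin n := ⟨(j : ℕ) + d + 1, hkn⟩ with hk
    have hkv : (k : ℕ) = (j : ℕ) + d + 1 := rfl
    have hjk : j < k := Fin.lt_def.2 (by omega)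
    have hkj' : k < j' := Fin.lt_def.2 (by omega)
    have hwk : w k = -cartan B (β k) (uvec B β j d) := by
      rcases hrec k hjk hkj' with h | h
      · rwa [hkv, ih hd'] at h
      · rwa [show (k : ℕ) - (j : ℕ) - 1 = d by omega] at h
    have e2 : (j : ℕ) + (d + 1) + 1 = ((j : ℕ) + d + 1) + 1 := by omega
    rw [e2, psum_succ β hkn w, ih hd', hwk,
      uvec_succ B β j d (show (j : ℕ) + 1 + d < n by omega)]
    have e3 : (⟨(j : ℕ) + 1 + d, by omega⟩ : Fin n) = k :=
      Fin.ext (show (j : ℕ) + 1 + d = (j : ℕ) + d + 1 by omega)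
    rw [e3, sRefl]
    module

lemma master (hB : ∀ x y, B x y = B y x) (hβ : ∀ i, B (β i) (β i) ≠ 0)
    (j j' : Fin n) (hjj' : j < j') (θ : Fin n → ℤ)
    (hθW : θ ∈ Wset (lam B β) β) (hJ : Jset θ = {j, j'}) :
    θ j = -1 ∧ θ j' = -1 ∧ (∀ k : Fin n, k < j → θ k = 0) ∧
    (∀ k : Fin n, j' < k → θ k = 0) ∧
    (∀ k : Fin n, j < k → k < j' → (θ k : ℂ) = -cartan B (gam B β k) (gam B β j)) ∧
    gam B β j' = gam B β j := by
  obtain ⟨hge, hmv, hbm⟩ := hθW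
  have hmem : ∀ k : Fin n, θ k = -1 ↔ (k = j ∨ k = j') := by
    intro k
    constructor
    · intro h
      have hk : k ∈ Jset θ := by simp [Jset, h]
      rw [hJ] at hk
      simpa using hk
    · intro h
      have hk : k ∈ ({j, j'} : Finset (Fin n)) := by
        rcases h with rfl | rfl <;> simp
      rw [← hJ] at hk
      simpa [Jset] using hk
  have hθj : θ j = -1 := (hmem j).2 (Or.inl rfl)
  have hθj' : θ j' = -1 := (hmem j').2 (Or.inr rfl)
  have hrec : ∀ k : Fin n, k ≠ j → k ≠ j' →
      (cvec θ) k = -cartan B (β k) (psum β (k : ℕ) (cvec θ)) := by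
    intro k h1 h2
    have hk : k ∉ Jset θ := by
      simp only [Jset, Finset.mem_filter, Finset.mem_univ, true_and]
      intro h
      rcases (hmem k).1 h with rfl | rfl
      · exact h1 rfl
      · exact h2 rfl
    exact (lam_mulVec_zero_iff B β hB hβ (cvec θ) hbm k).1 (hmv k hk)
  have hz1 : ∀ k : Fin n, (k : ℕ) < (j : ℕ) → θ k = 0 := by
    have key : ∀ m : ℕ, ∀ k : Fin n, (k : ℕ) = m → (k : ℕ) < (j : ℕ) → θ k = 0 := by
      intro m
      induction m using Nat.strong_induction_on with
      | _ m ih =>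
        intro k hk hkj
        have hps : psum β (k : ℕ) (cvec θ) = 0 := by
          refine psum_eq_zero β _ fun l hl => ?_
          have : θ l = 0 := ih (l : ℕ) (by omega) l rfl (by omega)
          simp [cvec, this]
        have h1 : k ≠ j := by
          intro h
          rw [h] at hkj
          omega
        have h2 : k ≠ j' := by
          intro h
          rw [h] at hkj
          have := Fin.lt_def.1 hjj'
          omega
        have := hrec k h1 h2
        rw [hps, cartan_zero_right, neg_zero] at this
        exact_mod_cast show ((θ k : ℤ) : ℂ) = 0 from this
    exact fun k hk => key (k : ℕ) k rfl hk
  have hz2' : ∀ m : ℕ, ∀ k : Fin n, n - (k : ℕ) ≤ m → (j' : ℕ) < (k : ℕ) → θ k = 0 := by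
    intro m
    induction m with
    | zero =>
      intro k hk _
      have := k.isLt
      omega
    | succ m ih =>
      intro k hk hk'
      have hzgt : ∀ l : Fin n, (k : ℕ) < (l : ℕ) → θ l = 0 := fun l hl =>
        ih l (by omega) (by omega)
      have hsplit := bmap_split β (k : ℕ) (cvec θ)
      rw [hbm] at hsplit
      have htail : ∑ l ∈ Finset.univ.filter (fun l : Fin n => ¬ (l : ℕ) < (k : ℕ)),
          cvec θ l • β l = cvec θ k • β k := by
        refine Finset.sum_eq_single k (fun l hl hlk => ?_) (fun h => absurd (by simp) h)
        have hlv : (k : ℕ) < (l : ℕ) := by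
          simp only [Finset.mem_filter, Finset.mem_univ, true_and, not_lt] at hl
          rcases lt_or_eq_of_le hl with h | h
          · exact h
          · exact absurd (Fin.ext h.symm) hlk
        rw [show cvec θ l = 0 by simp [cvec, hzgt l hlv], zero_smul]
      rw [htail] at hsplit
      have hpk : psum β (k : ℕ) (cvec θ) = (-(cvec θ k)) • β k := by
        rw [neg_smul]
        exact eq_neg_of_add_eq_zero_left hsplit.symm
      have h1 : k ≠ j := by
        intro h
        rw [h] at hk'
        have := Fin.lt_def.1 hjj'
        omega
      have h2 : k ≠ j' := by
        intro h
        rw [h] at hk'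
        omega
      have hc := hrec k h1 h2
      rw [hpk, cartan_smul_self B (β k) (hβ k)] at hc
      have hck : cvec θ k = 0 := by
        linear_combination -hc
      exact_mod_cast show ((θ k : ℤ) : ℂ) = 0 from hck
  have hz2 : ∀ k : Fin n, j' < k → θ k = 0 := fun k h =>
    hz2' n k (by omega) (Fin.lt_def.1 h)
  have hP := psum_eq_u B β j j' hjj' (cvec θ)
    (fun l hl => by simp [cvec, hz1 l hl])
    (by simp [cvec, hθj])
    (fun k h1 h2 => Or.inl (hrec k (ne_of_gt h1) (ne_of_lt h2)))
  have hmid : ∀ k : Fin n, j < k → k < j' →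
      (θ k : ℂ) = -cartan B (gam B β k) (gam B β j) := by
    intro k h1 h2
    have h1' := Fin.lt_def.1 h1
    have h2' := Fin.lt_def.1 h2
    set d := (k : ℕ) - (j : ℕ) - 1 with hdd
    have hps : psum β (k : ℕ) (cvec θ) = uvec B β j d := by
      rw [show (k : ℕ) = (j : ℕ) + d + 1 by omega]
      exact hP d (by omega)
    have := hrec k (ne_of_gt h1) (ne_of_lt h2)
    rw [hps, ← cartan_gam B β hB hβ j k h1] at this
    simpa [cvec] using this
  refine ⟨hθj, hθj', fun k hk => hz1 k (Fin.lt_def.1 hk), hz2, hmid, ?_⟩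
  have hsplit := bmap_split β ((j' : ℕ) + 1) (cvec θ)
  rw [hbm] at hsplit
  have htail : ∑ l ∈ Finset.univ.filter (fun l : Fin n => ¬ (l : ℕ) < (j' : ℕ) + 1),
      cvec θ l • β l = 0 := by
    refine Finset.sum_eq_zero fun l hl => ?_
    simp only [Finset.mem_filter, Finset.mem_univ, true_and, not_lt] at hl
    have : θ l = 0 := hz2 l (Fin.lt_def.2 (by omega))
    simp [cvec, this]
  rw [htail, add_zero] at hsplit
  have hjn : (j' : ℕ) < n := j'.isLt
  have e1 : (⟨(j' : ℕ), hjn⟩ : Fin n) = j' := Fin.ext rfl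
  rw [psum_succ β hjn, e1] at hsplit
  have hjv := Fin.lt_def.1 hjj'
  set d := (j' : ℕ) - (j : ℕ) - 1 with hdd
  have hps : psum β (j' : ℕ) (cvec θ) = uvec B β j d := by
    rw [show (j' : ℕ) = (j : ℕ) + d + 1 by omega]
    exact hP d (by omega)
  rw [hps, show cvec θ j' = -1 by simp [cvec, hθj']] at hsplit
  rw [gam_eq_iff B β hB hβ j j' hjj', ← hdd]
  rw [neg_one_smul, ← sub_eq_add_neg] at hsplit
  exact (sub_eq_zero.mp hsplit.symm).symm

end Aux4
theorem stmt12 (n : ℕ) (hn : 0 < n) {V : Type*} [AddCommGroup V] [Module ℂ V]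
    (B : V →ₗ[ℂ] V →ₗ[ℂ] ℂ) (hBsymm : ∀ x y, B x y = B y x)
    (β : Fin n → V) (hβ : ∀ j, B (β j) (β j) ≠ 0)
    (j j' : Fin n) (hjj' : j < j') :
    ((∃ θ ∈ Sset (lam B β) β, Jset θ = {j, j'}) ↔
      (gam B β j' = gam B β j ∧ (∀ k, j < k → k < j' → gam B β k ≠ gam B β j) ∧
        (∀ k, j < k → k < j' →
          ∃ m : ℤ, m ≤ 0 ∧ cartan B (gam B β k) (gam B β j) = (m : ℂ)))) ∧
    (∀ θ ∈ Sset (lam B β) β, Jset θ = {j, j'} →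
      (θ j = -1 ∧ θ j' = -1 ∧
        (∀ k, j < k → k < j' → (θ k : ℂ) = -cartan B (gam B β k) (gam B β j)) ∧
        (∀ k, k < j ∨ j' < k → θ k = 0))) := by
  have hjv : (j : ℕ) < (j' : ℕ) := Fin.lt_def.1 hjj'
  constructor
  · constructor
    · rintro ⟨θ, ⟨hθW, hcard⟩, hJ⟩
      obtain ⟨hθj, hθj', hz1, hz2, hmid, hγ⟩ := master B β hBsymm hβ j j' hjj' θ hθW hJ
      have hnn : ∀ k : Fin n, j < k → k < j' → 0 ≤ θ k := by
        intro k h1 h2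
        have hge := hθW.1 k
        have hne : θ k ≠ -1 := by
          intro h
          have hk : k ∈ Jset θ := by simp [Jset, h]
          rw [hJ] at hk
          simp only [Finset.mem_insert, Finset.mem_singleton] at hk
          rcases hk with rfl | rfl
          · exact lt_irrefl _ h1
          · exact lt_irrefl _ h2
        omega
      refine ⟨hγ, ?_, ?_⟩
      · intro k h1 h2 hkeq
        have h2' := hmid k h1 h2
        rw [hkeq, cartan_self B _ (by rw [B_gam_self B β hBsymm hβ]; exact hβ j)] at h2'
        have h3 : θ k = -2 := by exact_mod_cast h2'
        have := hnn k h1 h2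
        omega
      · intro k h1 h2
        refine ⟨-(θ k), by have := hnn k h1 h2; omega, ?_⟩
        push_cast
        linear_combination (hmid k h1 h2)
    · rintro ⟨hγ, hneq, hcart⟩
      classical
      choose μ hμ0 hμc using hcart
      set θ₀ : Fin n → ℤ := fun k =>
        if h : j < k ∧ k < j' then -(μ k h.1 h.2)
        else if k = j ∨ k = j' then -1 else 0 with hθ₀def
      have hv_mid : ∀ (k : Fin n) (h1 : j < k) (h2 : k < j'), θ₀ k = -(μ k h1 h2) := by
        intro k h1 h2
        simp only [hθ₀def]
        rw [dif_pos ⟨h1, h2⟩]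
      have hv_j : θ₀ j = -1 := by
        simp only [hθ₀def]
        rw [dif_neg (fun h => lt_irrefl j h.1)]
        simp
      have hv_j' : θ₀ j' = -1 := by
        simp only [hθ₀def]
        rw [dif_neg (fun h => lt_irrefl j' h.2)]
        simp
      have hv_out : ∀ k : Fin n, ¬(j < k ∧ k < j') → k ≠ j → k ≠ j' → θ₀ k = 0 := by
        intro k h hkj hkj'
        simp only [hθ₀def]
        rw [dif_neg h, if_neg (by tauto)]
      have htri : ∀ k : Fin n, k = j ∨ k = j' ∨ (k : ℕ) < (j : ℕ)
          ∨ ((j : ℕ) < (k : ℕ) ∧ (k : ℕ) < (j' : ℕ)) ∨ (j' : ℕ) < (k : ℕ) := by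
        intro k
        rcases eq_or_ne k j with rfl | h1
        · exact Or.inl rfl
        rcases eq_or_ne k j' with rfl | h2
        · exact Or.inr (Or.inl rfl)
        have h1' : (k : ℕ) ≠ (j : ℕ) := fun h => h1 (Fin.ext h)
        have h2' : (k : ℕ) ≠ (j' : ℕ) := fun h => h2 (Fin.ext h)
        omega
      have hout_nat : ∀ k : Fin n, (k : ℕ) < (j : ℕ) ∨ (j' : ℕ) < (k : ℕ) → θ₀ k = 0 := by
        intro k hk
        refine hv_out k (fun h => ?_) (fun h => by subst h; omega) (fun h => by subst h; omega)
        have := Fin.lt_def.1 h.1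
        have := Fin.lt_def.1 h.2
        omega
      have hJ0 : Jset θ₀ = {j, j'} := by
        ext k
        simp only [Jset, Finset.mem_filter, Finset.mem_univ, true_and, Finset.mem_insert,
          Finset.mem_singleton]
        constructor
        · intro h
          by_contra hc
          push_neg at hc
          obtain ⟨h1, h2⟩ := hc
          rcases htri k with rfl | rfl | hk | hk | hk
          · exact h1 rfl
          · exact h2 rfl
          · rw [hout_nat k (Or.inl hk)] at h
            omega
          · have hmv := hv_mid k (Fin.lt_def.2 hk.1) (Fin.lt_def.2 hk.2)
            have := hμ0 k (Fin.lt_def.2 hk.1) (Fin.lt_def.2 hk.2)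
            omega
          · rw [hout_nat k (Or.inr hk)] at h
            omega
        · rintro (rfl | rfl)
          · exact hv_j
          · exact hv_j'
      have hButside : β j' = uvec B β j ((j' : ℕ) - (j : ℕ) - 1) :=
        (gam_eq_iff B β hBsymm hβ j j' hjj').1 hγ
      have hrecu : ∀ k : Fin n, j < k → k < j' →
          cvec θ₀ k = -cartan B (β k) (uvec B β j ((k : ℕ) - (j : ℕ) - 1)) := by
        intro k h1 h2
        rw [← cartan_gam B β hBsymm hβ j k h1, hμc k h1 h2]
        simp [cvec, hv_mid k h1 h2]
      have hP := psum_eq_u B β j j' hjj' (cvec θ₀)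
        (fun l hl => by
          rw [cvec]
          rw [hout_nat l (Or.inl hl)]
          simp)
        (by simp [cvec, hv_j])
        (fun k h1 h2 => Or.inr (hrecu k h1 h2))
      have hjn : (j' : ℕ) < n := j'.isLt
      have e1 : (⟨(j' : ℕ), hjn⟩ : Fin n) = j' := Fin.ext rfl
      have hps' : psum β (j' : ℕ) (cvec θ₀) = uvec B β j ((j' : ℕ) - (j : ℕ) - 1) := by
        obtain ⟨d, hd⟩ : ∃ d, (j' : ℕ) = (j : ℕ) + d + 1 := ⟨(j' : ℕ) - (j : ℕ) - 1, by omega⟩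
        rw [show (j' : ℕ) - (j : ℕ) - 1 = d by omega, hd]
        exact hP d (by omega)
      have hbm0 : bmap β (cvec θ₀) = 0 := by
        have hsplit := bmap_split β ((j' : ℕ) + 1) (cvec θ₀)
        have htail0 : ∑ l ∈ Finset.univ.filter (fun l : Fin n => ¬ (l : ℕ) < (j' : ℕ) + 1),
            cvec θ₀ l • β l = 0 := by
          refine Finset.sum_eq_zero fun l hl => ?_
          simp only [Finset.mem_filter, Finset.mem_univ, true_and, not_lt] at hl
          rw [cvec, hout_nat l (Or.inr (by omega))]
          simp
        rw [hsplit, htail0, add_zero, psum_succ β hjn, e1, hps', cvec, hv_j', ← hButside]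
        push_cast
        module
      refine ⟨θ₀, ⟨⟨?_, ?_, hbm0⟩, ?_⟩, hJ0⟩
      · intro k
        rcases htri k with rfl | rfl | hk | hk | hk
        · rw [hv_j]
        · rw [hv_j']
        · rw [hout_nat k (Or.inl hk)]
          omega
        · rw [hv_mid k (Fin.lt_def.2 hk.1) (Fin.lt_def.2 hk.2)]
          have := hμ0 k (Fin.lt_def.2 hk.1) (Fin.lt_def.2 hk.2)
          omega
        · rw [hout_nat k (Or.inr hk)]
          omega
      · intro k hk
        rw [hJ0] at hk
        simp only [Finset.mem_insert, Finset.mem_singleton] at hk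
        push_neg at hk
        obtain ⟨hk1, hk2⟩ := hk
        refine (lam_mulVec_zero_iff B β hBsymm hβ (cvec θ₀) hbm0 k).2 ?_
        rcases htri k with rfl | rfl | hkk | hkk | hkk
        · exact absurd rfl hk1
        · exact absurd rfl hk2
        · have hps0 : psum β (k : ℕ) (cvec θ₀) = 0 := by
            refine psum_eq_zero β _ fun l hl => ?_
            rw [cvec, hout_nat l (Or.inl (by omega))]
            simp
          rw [hps0, cartan_zero_right, neg_zero, cvec, hout_nat k (Or.inl hkk)]
          simp
        · have h1 := Fin.lt_def.2 hkk.1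
          have h2 := Fin.lt_def.2 hkk.2
          have hpsk : psum β (k : ℕ) (cvec θ₀) = uvec B β j ((k : ℕ) - (j : ℕ) - 1) := by
            obtain ⟨d, hd⟩ : ∃ d, (k : ℕ) = (j : ℕ) + d + 1 := ⟨(k : ℕ) - (j : ℕ) - 1, by omega⟩
            rw [show (k : ℕ) - (j : ℕ) - 1 = d by omega, hd]
            exact hP d (by omega)
          rw [hpsk]
          exact hrecu k h1 h2
        · have hsplit := bmap_split β (k : ℕ) (cvec θ₀)
          rw [hbm0] at hsplit
          have htail0 : ∑ l ∈ Finset.univ.filter (fun l : Fin n => ¬ (l : ℕ) < (k : ℕ)),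
              cvec θ₀ l • β l = 0 := by
            refine Finset.sum_eq_zero fun l hl => ?_
            simp only [Finset.mem_filter, Finset.mem_univ, true_and, not_lt] at hl
            rw [cvec, hout_nat l (Or.inr (by omega))]
            simp
          rw [htail0, add_zero] at hsplit
          rw [← hsplit, cartan_zero_right, neg_zero, cvec, hout_nat k (Or.inr hkk)]
          simp
      · rw [hJ0]
        exact Finset.card_pair (ne_of_lt hjj')
  · rintro θ ⟨hθW, hcard⟩ hJ
    obtain ⟨hθj, hθj', hz1, hz2, hmid, hγ⟩ := master B β hBsymm hβ j j' hjj' θ hθW hJ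
    refine ⟨hθj, hθj', hmid, fun k hk => ?_⟩
    rcases hk with hk | hk
    · exact hz1 k (Fin.lt_def.1 hk)
    · exact hz2 k hk
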